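/- Let S, I₁, R, b, K, α₁, ρ₁ be positive reals, let μ₀ < μ₁' and μ₁ = ρ₁ + μ₁', set N = S + I₁ + R, and assume the equilibrium relation α₁(S + I₁) = μ₁ − μ₀. Define a₀ = ρ₁α₁²SI₁²/R + (bα₁²/K)SI₁R + (bα₁ρ₁/K)SI₁, a₁ = α₁²SI₁ + (ρ₁b/K)I₁²/R + (ρ₁b/K)I₁ + (ρ₁b/K)SI₁/R, a₂ = (b/K)N + ρ₁I₁/R. Then a₀ > 0, a₁ > 0, a₂ > 0 and a₂a₁ − a₀ = (bα₁/K)(μ₁'−μ₀)SI₁ + ((b/K)N + ρ₁I₁/R)((ρ₁b/K)I₁²/R + (ρ₁b/K)I₁ + (ρ₁b/K)SI₁/R) > 0; consequently, by the Routh–Hurwitz criterion, every complex root of the cubic polynomial λ³ + a₂λ² + a₁λ + a₀ has negative real part. -/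

import Mathlib

lemma rh_cubic (a0 a1 a2 : ℝ) (h0 : 0 < a0) (h1 : 0 < a1) (h2 : 0 < a2)
    (h : a0 < a2 * a1) :
    ∀ z : ℂ, z ^ 3 + (a2 : ℂ) * z ^ 2 + (a1 : ℂ) * z + (a0 : ℂ) = 0 → z.re < 0 := by
  intro z hz
  by_contra hx'
  push_neg at hx'
  rw [Complex.ext_iff] at hz
  simp only [Complex.add_re, Complex.add_im, Complex.mul_re, Complex.mul_im,
    Complex.ofReal_re, Complex.ofReal_im, pow_succ, pow_zero, one_mul,
    Complex.one_re, Complex.one_im, Complex.zero_re, Complex.zero_im] at hz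
  obtain ⟨hre, him⟩ := hz
  set x := z.re with hxdef
  set y := z.im with hydef
  have HRE : x ^ 3 - 3 * x * y ^ 2 + a2 * x ^ 2 - a2 * y ^ 2 + a1 * x + a0 = 0 := by
    linear_combination hre
  have hfac : y * (3 * x ^ 2 - y ^ 2 + 2 * a2 * x + a1) = 0 := by
    linear_combination him
  rcases mul_eq_zero.mp hfac with hy | hy
  · rw [hy] at HRE
    nlinarith [mul_nonneg hx' hx', mul_nonneg (mul_nonneg hx' hx') hx',
      mul_nonneg h2.le (mul_nonneg hx' hx'), mul_nonneg h1.le hx']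
  · have hy2 : y ^ 2 = 3 * x ^ 2 + 2 * a2 * x + a1 := by linarith
    rw [hy2] at HRE
    nlinarith [mul_nonneg (mul_nonneg hx' hx') hx',
      mul_nonneg h2.le (mul_nonneg hx' hx'), mul_nonneg h1.le hx',
      mul_nonneg (mul_nonneg h2.le h2.le) hx']

theorem stmt_16
    (S I1 R b K α1 ρ1 μ0 μ1' : ℝ)
    (hS : 0 < S) (hI1 : 0 < I1) (hR : 0 < R) (hb : 0 < b) (hK : 0 < K)
    (hα1 : 0 < α1) (hρ1 : 0 < ρ1) (hμ01 : μ0 < μ1')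
    (μ1 : ℝ) (hμ1 : μ1 = ρ1 + μ1')
    (N : ℝ) (hN : N = S + I1 + R)
    (heq : α1 * (S + I1) = μ1 - μ0)
    (a0 a1 a2 : ℝ)
    (ha0 : a0 = ρ1 * α1 ^ 2 * S * I1 ^ 2 / R + (b * α1 ^ 2 / K) * S * I1 * R
        + (b * α1 * ρ1 / K) * S * I1)
    (ha1 : a1 = α1 ^ 2 * S * I1 + (ρ1 * b / K) * I1 ^ 2 / R + (ρ1 * b / K) * I1
        + (ρ1 * b / K) * S * I1 / R)
    (ha2 : a2 = (b / K) * N + ρ1 * I1 / R) :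
    0 < a0 ∧ 0 < a1 ∧ 0 < a2 ∧
    a2 * a1 - a0 = (b * α1 / K) * (μ1' - μ0) * S * I1
      + ((b / K) * N + ρ1 * I1 / R) * ((ρ1 * b / K) * I1 ^ 2 / R + (ρ1 * b / K) * I1
        + (ρ1 * b / K) * S * I1 / R) ∧
    0 < a2 * a1 - a0 ∧
    ∀ z : ℂ, z ^ 3 + (a2 : ℂ) * z ^ 2 + (a1 : ℂ) * z + (a0 : ℂ) = 0 → z.re < 0 := by
  subst hμ1 hN ha0 ha1 ha2
  have h0 : (0:ℝ) < ρ1 * α1 ^ 2 * S * I1 ^ 2 / R + (b * α1 ^ 2 / K) * S * I1 * R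
      + (b * α1 * ρ1 / K) * S * I1 := by positivity
  have h1 : (0:ℝ) < α1 ^ 2 * S * I1 + (ρ1 * b / K) * I1 ^ 2 / R + (ρ1 * b / K) * I1
      + (ρ1 * b / K) * S * I1 / R := by positivity
  have h2 : (0:ℝ) < (b / K) * (S + I1 + R) + ρ1 * I1 / R := by positivity
  have hid : ((b / K) * (S + I1 + R) + ρ1 * I1 / R) *
        (α1 ^ 2 * S * I1 + (ρ1 * b / K) * I1 ^ 2 / R + (ρ1 * b / K) * I1
          + (ρ1 * b / K) * S * I1 / R)
      - (ρ1 * α1 ^ 2 * S * I1 ^ 2 / R + (b * α1 ^ 2 / K) * S * I1 * R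
          + (b * α1 * ρ1 / K) * S * I1)
      = (b * α1 / K) * (μ1' - μ0) * S * I1
      + ((b / K) * (S + I1 + R) + ρ1 * I1 / R) * ((ρ1 * b / K) * I1 ^ 2 / R
          + (ρ1 * b / K) * I1 + (ρ1 * b / K) * S * I1 / R) := by
    field_simp
    linear_combination (b * S * R ^ 2 * K * α1) * heq
  have hpos : 0 < (b * α1 / K) * (μ1' - μ0) * S * I1
      + ((b / K) * (S + I1 + R) + ρ1 * I1 / R) * ((ρ1 * b / K) * I1 ^ 2 / R
          + (ρ1 * b / K) * I1 + (ρ1 * b / K) * S * I1 / R) := by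
    have : 0 < μ1' - μ0 := by linarith
    positivity
  refine ⟨h0, h1, h2, hid, hid ▸ hpos, rh_cubic _ _ _ h0 h1 h2 (by linarith [hid ▸ hpos])⟩
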